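/- Let α > 2, S > 0 and r₁ > 0 be real numbers. Then ∫_{r₁}^∞ (1 − 1/(1 + S (r₁/r)^α)) · r dr = (1/2) r₁² ρ(S), where ρ(x) = x^(2/α) ∫_{x^(−2/α)}^∞ du/(1 + u^(α/2)). The identity is obtained by the change of variables u = (r/r₁)² S^(−2/α). -/

import Mathlib

open MeasureTheory Real Set Filter

/-- Change of variables `u = (r/r₁)² S^(−2/α)` in the Laplace functional of the aggregate
Poisson interference: for `α > 2`, `S > 0` and `r₁ > 0`,
`∫_{r₁}^∞ (1 − 1/(1 + S (r₁/r)^α)) · r dr = (1/2) r₁² ρ(S)`,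
where `ρ(x) = x^(2/α) ∫_{x^(−2/α)}^∞ du/(1 + u^(α/2))`. -/
theorem interference_integral_change_of_variables (α S r₁ : ℝ) (hα : 2 < α) (hS : 0 < S)
    (hr₁ : 0 < r₁) :
    ∫ r in Set.Ioi r₁, (1 - 1 / (1 + S * (r₁ / r) ^ α)) * r =
      (1 / 2) * r₁ ^ 2 *
        (S ^ (2 / α) * ∫ u in Set.Ioi (S ^ (-(2 / α))), 1 / (1 + u ^ (α / 2))) := by
  have hα0 : (0:ℝ) < α := by linarith
  set c : ℝ := S ^ (-(2/α)) with hc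
  have hc0 : 0 < c := rpow_pos_of_pos hS _
  set g : ℝ → ℝ := fun u => 1 / (1 + u ^ (α/2)) with hgdef
  set f : ℝ → ℝ := fun r => c / r₁^2 * r^2 with hfdef
  set f' : ℝ → ℝ := fun r => c / r₁^2 * (2*r) with hf'def
  have hK : S ^ (2/α) * c = 1 := by
    rw [hc, ← rpow_add hS]
    simp
  -- f r₁ = c
  have hfr₁ : f r₁ = c := by
    rw [hfdef]
    field_simp
  -- g continuous on positives
  have hgc : ContinuousOn g (Ioi (0:ℝ)) := by
    apply ContinuousOn.div continuousOn_const
    · exact continuousOn_const.add (continuousOn_id.rpow_const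
        (fun x hx => Or.inl (ne_of_gt hx)))
    · intro x hx
      have : (0:ℝ) ≤ x ^ (α/2) := rpow_nonneg (le_of_lt hx) _
      positivity
  -- f maps Ici r₁ into Ici c
  have hmaps : ∀ r ∈ Ici r₁, c ≤ f r := by
    intro r hr
    have hr0 : 0 < r := lt_of_lt_of_le hr₁ hr
    have : r₁^2 ≤ r^2 := by nlinarith [mem_Ici.mp hr]
    show c ≤ c / r₁^2 * r^2
    rw [div_mul_eq_mul_div, le_div_iff₀ (by positivity)]
    nlinarith
  have hIciPos : ∀ r ∈ Ici r₁, 0 < f r := fun r hr => lt_of_lt_of_le hc0 (hmaps r hr)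
  -- continuity of f
  have hfc : Continuous f := by
    rw [hfdef]; exact continuous_const.mul (continuous_pow 2)
  have hft : Tendsto f atTop atTop := by
    rw [hfdef]
    exact (tendsto_pow_atTop two_ne_zero).const_mul_atTop (by positivity)
  have hderiv : ∀ x, HasDerivAt f (f' x) x := by
    intro x
    rw [hfdef, hf'def]
    simpa [mul_comm] using (hasDerivAt_pow 2 x).const_mul (c / r₁^2)
  -- key rpow computation
  have hfrpow' : ∀ r : ℝ, 0 < r → (f r) ^ (α/2) = S⁻¹ * (r/r₁)^α := by
    intro r hr0
    have hfr : f r = c * (r/r₁)^(2:ℕ) := by rw [hfdef]; field_simp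
    rw [hfr, mul_rpow hc0.le (by positivity)]
    congr 1
    · rw [hc, ← rpow_mul hS.le, show -(2/α)*(α/2) = (-1:ℝ) by field_simp, rpow_neg_one]
    · rw [← rpow_natCast (r/r₁) 2, ← rpow_mul (by positivity)]
      push_cast
      rw [show (2:ℝ) * (α/2) = α by ring]
  have hKS : S ^ (2/α) = c⁻¹ := by
    field_simp
    linarith [hK]
  -- pointwise identity
  have key : ∀ r ∈ Ioi r₁,
      (1 - 1 / (1 + S * (r₁ / r) ^ α)) * r
        = ((1/2) * r₁^2 * S^(2/α)) * ((g ∘ f) r * f' r) := by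
    intro r hr
    have hr0 : 0 < r := lt_trans hr₁ hr
    have ht : 0 < (r/r₁)^α := rpow_pos_of_pos (by positivity) _
    have hs : (r₁/r)^α = ((r/r₁)^α)⁻¹ := by
      rw [show r₁/r = (r/r₁)⁻¹ by rw [inv_div], inv_rpow (by positivity)]
    simp only [Function.comp_apply, hgdef, hf'def, hfrpow' r hr0, hKS, hs]
    set t := (r/r₁)^α
    have h1 : 0 < 1 + S * t⁻¹ := by positivity
    have h2 : 0 < 1 + S⁻¹ * t := by positivity
    field_simp
    ring
  -- integrability of g on Ici c
  have himg : f '' Ici r₁ ⊆ Ici c := by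
    rintro _ ⟨r, hr, rfl⟩; exact hmaps r hr
  have hgIci : IntegrableOn g (Ici c) := by
    rw [integrableOn_Ici_iff_integrableOn_Ioi]
    have hbase : IntegrableOn (fun u : ℝ => u ^ (-(α/2))) (Ioi c) :=
      integrableOn_Ioi_rpow_of_lt (by linarith) hc0
    refine hbase.mono' ((hgc.mono (Ioi_subset_Ioi hc0.le)).aestronglyMeasurable
      measurableSet_Ioi) ?_
    rw [ae_restrict_iff' measurableSet_Ioi]
    filter_upwards with u hu
    have hu0 : 0 < u := lt_trans hc0 hu
    have hy : 0 < u ^ (α/2) := rpow_pos_of_pos hu0 _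
    have hgu : g u = 1 / (1 + u ^ (α/2)) := rfl
    rw [hgu, norm_of_nonneg (by positivity), rpow_neg hu0.le, ← one_div]
    exact one_div_le_one_div_of_le hy (by linarith)
  have hg1 : IntegrableOn g (f '' Ici r₁) := hgIci.mono_set himg
  -- integrability of the substituted integrand
  have hg2 : IntegrableOn (fun x => (g ∘ f) x * f' x) (Ici r₁) := by
    have hmeas : ContinuousOn (fun x => (g ∘ f) x * f' x) (Ici r₁) := by
      refine ContinuousOn.mul ?_ ?_
      · exact hgc.comp hfc.continuousOn (fun r hr => mem_Ioi.mpr (hIciPos r hr))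
      · exact Continuous.continuousOn (by rw [hf'def]; fun_prop)
    set A : ℝ := 2*c*S*r₁^α/r₁^2 with hA
    have hbase : IntegrableOn (fun r : ℝ => A * r ^ (1-α)) (Ici r₁) := by
      rw [integrableOn_Ici_iff_integrableOn_Ioi]
      exact (integrableOn_Ioi_rpow_of_lt (by linarith) hr₁).const_mul A
    refine hbase.mono' (hmeas.aestronglyMeasurable measurableSet_Ici) ?_
    rw [ae_restrict_iff' measurableSet_Ici]
    filter_upwards with r hr
    have hr0 : 0 < r := lt_of_lt_of_le hr₁ hr
    have ht : 0 < (r/r₁)^α := rpow_pos_of_pos (by positivity) _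
    have hval : (g ∘ f) r * f' r = (1 / (1 + S⁻¹ * (r/r₁)^α)) * (c / r₁^2 * (2*r)) := by
      simp only [Function.comp_apply, hgdef, hf'def]
      rw [hfrpow' r hr0]
    rw [hval, norm_of_nonneg (by positivity)]
    have hle : 1 / (1 + S⁻¹ * (r/r₁)^α) ≤ 1 / (S⁻¹ * (r/r₁)^α) := by
      apply one_div_le_one_div_of_le (by positivity)
      linarith
    have step : (1 / (1 + S⁻¹ * (r/r₁)^α)) * (c / r₁^2 * (2*r))
        ≤ (1 / (S⁻¹ * (r/r₁)^α)) * (c / r₁^2 * (2*r)) := by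
      apply mul_le_mul_of_nonneg_right hle (by positivity)
    refine step.trans (le_of_eq ?_)
    rw [div_rpow hr0.le hr₁.le, hA,
      show (1:ℝ) - α = 1 + -α by ring, rpow_add hr0, rpow_one, rpow_neg hr0.le]
    have hrα : (0:ℝ) < r ^ α := rpow_pos_of_pos hr0 _
    field_simp
  -- change of variables
  have hCOV : (∫ x in Ioi r₁, (g ∘ f) x * f' x) = ∫ u in Ioi (f r₁), g u := by
    refine integral_comp_mul_deriv_Ioi hfc.continuousOn hft
      (fun x _ => (hderiv x).hasDerivWithinAt) ?_ hg1 hg2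
    exact hgc.mono (fun u hu => by
      obtain ⟨r, hr, rfl⟩ := hu
      exact mem_Ioi.mpr (hIciPos r (mem_Ici.mpr (le_of_lt (mem_Ioi.mp hr)))))
  calc ∫ r in Ioi r₁, (1 - 1 / (1 + S * (r₁ / r) ^ α)) * r
      = ∫ r in Ioi r₁, ((1/2) * r₁^2 * S^(2/α)) * ((g ∘ f) r * f' r) :=
        setIntegral_congr_fun measurableSet_Ioi key
    _ = ((1/2) * r₁^2 * S^(2/α)) * ∫ r in Ioi r₁, (g ∘ f) r * f' r :=
        integral_const_mul _ _
    _ = ((1/2) * r₁^2 * S^(2/α)) * ∫ u in Ioi c, g u := by rw [hCOV, hfr₁]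
    _ = (1 / 2) * r₁ ^ 2 * (S ^ (2 / α) * ∫ u in Ioi c, g u) := by ring
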